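/- arXiv:2408.11543 — 2 statements merged into one kernel-verified Lean document; each statement's English description precedes it below -/
import Mathlib

section
/- Let F be a free group of rank d ≥ 2 and S a finite symmetric generating set of F with word metric d_S. Let f ∈ ∂(F,d_S) be a metric functional, and let K = { x ∈ F : x.h = h for every h in the orbit {g.f : g ∈ F} } be the pointwise stabilizer of the orbit of f. Then K = {1}. -/
open Filter Topology

section Defs

variable {G : Type*}

/-- `d` is a metric on `X` (nonnegative, vanishing exactly on the diagonal,
symmetric, triangle inequality). -/
def IsMetric {X : Type*} (d : X → X → ℝ) : Prop :=
  (∀ x y, 0 ≤ d x y) ∧ (∀ x y, d x y = 0 ↔ x = y) ∧ (∀ x y, d x y = d y x) ∧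
    (∀ x y z, d x z ≤ d x y + d y z)

/-- The Busemann function of `x` with base point `1`: `b_x(y) = d(x,y) - d(x,1)`. -/
def bus [Group G] (d : G → G → ℝ) (x y : G) : ℝ := d x y - d x 1

/-- `h` belongs to the metric-functional boundary `∂(G,d)`: it is a pointwise
limit of Busemann functions and is not itself a Busemann function. -/
def InBoundary [Group G] (d : G → G → ℝ) (h : G → ℝ) : Prop :=
  (∃ u : ℕ → G, ∀ y : G, Tendsto (fun n => bus d (u n) y) atTop (𝓝 (h y))) ∧
    ∀ x : G, h ≠ bus d x

/-- The action of `x ∈ G` on functions: `(x.h)(y) = h(x⁻¹y) - h(x⁻¹)`. -/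
def act [Group G] (x : G) (h : G → ℝ) : G → ℝ := fun y => h (x⁻¹ * y) - h x⁻¹

/-- `S` is a finite symmetric generating set of `G`. -/
def FinSymGen [Group G] (S : Set G) : Prop :=
  S.Finite ∧ (∀ s ∈ S, s⁻¹ ∈ S) ∧ Subgroup.closure S = ⊤

/-- The word length of `x` with respect to `S`: the least `n` such that `x`
is a product of `n` elements of `S`. -/
noncomputable def wordLength [Group G] (S : Set G) (x : G) : ℕ :=
  sInf {n : ℕ | ∃ l : List G, (∀ s ∈ l, s ∈ S) ∧ l.length = n ∧ l.prod = x}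

/-- The word metric with respect to `S` : `d_S(x,y) = |x⁻¹y|_S`. -/
noncomputable def wordDist [Group G] (S : Set G) (x y : G) : ℝ :=
  (wordLength S (x⁻¹ * y) : ℝ)

/-- `(G,d)` is quasi-isometric to a Cayley graph of `G`. -/
def QIToCayley [Group G] (d : G → G → ℝ) : Prop :=
  ∃ S : Set G, FinSymGen S ∧ ∃ φ : G → G, ∃ C : ℝ, 0 < C ∧
    (∀ y : G, ∃ x : G, wordDist S (φ x) y ≤ C) ∧
    ∀ x y : G, C⁻¹ * d x y - C ≤ wordDist S (φ x) (φ y) ∧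
      wordDist S (φ x) (φ y) ≤ C * d x y + C

/-- A Banach metric on `G`: an integer-valued, left-invariant, proper metric,
quasi-isometric to a Cayley graph, all of whose metric functionals are unbounded. -/
def IsBanachMetric [Group G] (d : G → G → ℝ) : Prop :=
  IsMetric d ∧
  (∀ x y : G, ∃ n : ℕ, d x y = n) ∧
  (∀ x y z : G, d (z * x) (z * y) = d x y) ∧
  (∀ r : ℝ, {x : G | d x 1 ≤ r}.Finite) ∧
  QIToCayley d ∧
  ∀ h : G → ℝ, InBoundary d h → ¬ ∃ B : ℝ, ∀ x : G, |h x| ≤ B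

/-- A virtual homomorphism on `G`: a function `φ : G → ℤ` restricting to a
nontrivial homomorphism on some finite index subgroup. -/
def IsVirtualHom [Group G] (φ : G → ℤ) : Prop :=
  ∃ H : Subgroup G, H.FiniteIndex ∧
    (∀ a b : G, a ∈ H → b ∈ H → φ (a * b) = φ a + φ b) ∧
    ∃ a ∈ H, φ a ≠ 0

end Defs


namespace WD
variable {G : Type*} [Group G] {S : Set G}

lemma exists_rep (hS : FinSymGen S) (g : G) :
    ∃ l : List G, (∀ s ∈ l, s ∈ S) ∧ l.prod = g := by
  have hg : g ∈ Subgroup.closure S := by rw [hS.2.2]; trivial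
  induction hg using Subgroup.closure_induction with
  | mem x hx => exact ⟨[x], by simp [hx], by simp⟩
  | one => exact ⟨[], by simp, by simp⟩
  | mul x y _ _ ihx ihy =>
    obtain ⟨l₁, h₁, h₂⟩ := ihx
    obtain ⟨l₂, h₃, h₄⟩ := ihy
    refine ⟨l₁ ++ l₂, ?_, ?_⟩
    · intro s hs
      rcases List.mem_append.mp hs with h | h
      · exact h₁ s h
      · exact h₃ s h
    · rw [List.prod_append, h₂, h₄]
  | inv x _ ihx =>
    obtain ⟨l, h₁, h₂⟩ := ihx
    refine ⟨(l.map (·⁻¹)).reverse, ?_, ?_⟩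
    · intro s hs
      simp only [List.mem_reverse, List.mem_map] at hs
      obtain ⟨t, ht, rfl⟩ := hs
      exact hS.2.1 t (h₁ t ht)
    · rw [← h₂]
      exact (List.prod_inv_reverse l).symm

lemma repSet_nonempty (hS : FinSymGen S) (g : G) :
    {n : ℕ | ∃ l : List G, (∀ s ∈ l, s ∈ S) ∧ l.length = n ∧ l.prod = g}.Nonempty := by
  obtain ⟨l, h₁, h₂⟩ := exists_rep hS g
  exact ⟨l.length, l, h₁, rfl, h₂⟩

lemma wl_le {g : G} {l : List G} (h₁ : ∀ s ∈ l, s ∈ S) (h₂ : l.prod = g) :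
    wordLength S g ≤ l.length :=
  Nat.sInf_le ⟨l, h₁, rfl, h₂⟩

lemma wl_spec (hS : FinSymGen S) (g : G) :
    ∃ l : List G, (∀ s ∈ l, s ∈ S) ∧ l.length = wordLength S g ∧ l.prod = g :=
  Nat.sInf_mem (repSet_nonempty hS g)

lemma wl_one : wordLength S (1 : G) = 0 :=
  Nat.le_zero.mp (wl_le (l := []) (by simp) (by simp))

lemma wl_mul (hS : FinSymGen S) (g h : G) :
    wordLength S (g * h) ≤ wordLength S g + wordLength S h := by
  obtain ⟨l₁, h₁, h₂, h₃⟩ := wl_spec hS g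
  obtain ⟨l₂, h₄, h₅, h₆⟩ := wl_spec hS h
  have := wl_le (g := g * h) (l := l₁ ++ l₂)
    (by
      intro s hs
      rcases List.mem_append.mp hs with hh | hh
      · exact h₁ s hh
      · exact h₄ s hh)
    (by rw [List.prod_append, h₃, h₆])
  simpa [h₂, h₅] using this

lemma wl_inv_le (hS : FinSymGen S) (g : G) : wordLength S g⁻¹ ≤ wordLength S g := by
  obtain ⟨l, h₁, h₂, h₃⟩ := wl_spec hS g
  have := wl_le (g := g⁻¹) (l := (l.map (·⁻¹)).reverse)
    (by intro s hs
        simp only [List.mem_reverse, List.mem_map] at hs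
        obtain ⟨t, ht, rfl⟩ := hs
        exact hS.2.1 t (h₁ t ht))
    (by rw [← h₃]; exact (List.prod_inv_reverse l).symm)
  simpa [h₂] using this

lemma wl_inv (hS : FinSymGen S) (g : G) : wordLength S g⁻¹ = wordLength S g :=
  le_antisymm (wl_inv_le hS g) (by simpa using wl_inv_le hS g⁻¹)

lemma wl_single (hS : FinSymGen S) {s : G} (hs : s ∈ S) : wordLength S s ≤ 1 :=
  wl_le (l := [s]) (by simp [hs]) (by simp)

lemma wl_eq_zero (hS : FinSymGen S) {g : G} (h : wordLength S g = 0) : g = 1 := by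
  obtain ⟨l, h₁, h₂, h₃⟩ := wl_spec hS g
  rw [h] at h₂
  rw [List.length_eq_zero_iff.mp h₂] at h₃
  simpa using h₃.symm

end WD

namespace FGW
open FreeGroup List
set_option linter.unusedSectionVars false

variable {α : Type*} [DecidableEq α]

/-- letter inversion -/
def il (p : α × Bool) : α × Bool := (p.1, !p.2)

@[simp] lemma il_il (p : α × Bool) : il (il p) = p := by simp [il]

@[simp] lemma il_ne (p : α × Bool) : il p ≠ p := by
  rcases p with ⟨a, b⟩; simp [il]

lemma il_eq_comm {p q : α × Bool} : il p = q ↔ il q = p := by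
  constructor <;> (rintro rfl; simp)

/-- the no-cancellation relation between adjacent letters -/
def Rl (p q : α × Bool) : Prop := il p ≠ q

lemma Rl_swap {p q : α × Bool} (h : Rl p q) : Rl q p := by
  intro hc; exact h (il_eq_comm.mp hc)

lemma cancel_test (p q : α × Bool) : (p.1 = q.1 ∧ p.2 = !q.2) ↔ p = il q := by
  rcases p with ⟨a, b⟩; rcases q with ⟨c, d⟩
  simp [il, Prod.ext_iff, eq_comm]

/-- a word is reduced iff adjacent letters never cancel -/
lemma reduce_of_chain : ∀ {L : List (α × Bool)}, Chain' Rl L → reduce L = L := by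
  intro L
  induction L with
  | nil => intro _; rfl
  | cons x L ih =>
    intro h
    have hL : Chain' Rl L := h.tail
    have hred : reduce L = L := ih hL
    rw [reduce.cons, hred]
    cases L with
    | nil => rfl
    | cons hd tl =>
      have hx : Rl x hd := (List.isChain_cons_cons.mp h).1
      have : ¬(x.1 = hd.1 ∧ x.2 = !hd.2) := by
        rw [cancel_test]
        intro hc; exact hx (il_eq_comm.mpr hc.symm)
      simp [this]

lemma reduce_length_le : ∀ (L : List (α × Bool)), (reduce L).length ≤ L.length := by
  intro L
  induction L with
  | nil => simp
  | cons x L ih =>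
    rw [reduce.cons]
    rcases hL : reduce L with _ | ⟨hd, tl⟩
    · simp
    · by_cases hc : (x.1 = hd.1 ∧ x.2 = !hd.2)
      · simp only [hc, and_self, if_true]
        have := ih
        rw [hL] at this
        simp at this ⊢
        omega
      · simp only [hc, if_false]
        have := ih
        rw [hL] at this
        simp at this ⊢
        omega

lemma chain_of_reduce : ∀ {L : List (α × Bool)}, reduce L = L → Chain' Rl L := by
  intro L
  induction L with
  | nil => intro _; exact List.isChain_nil
  | cons x L ih =>
    intro h
    rw [reduce.cons] at h
    rcases hL : reduce L with _ | ⟨hd, tl⟩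
    · rw [hL] at h
      simp at h
      subst h
      exact List.isChain_singleton x
    · rw [hL] at h
      by_cases hc : (x.1 = hd.1 ∧ x.2 = !hd.2)
      · exfalso
        simp only [hc, and_self, if_true] at h
        have h1 : tl.length ≤ L.length - 1 := by
          have := reduce_length_le L
          rw [hL] at this; simp at this; omega
        have h2 : (x :: L).length = L.length + 1 := by simp
        rw [h] at h1
        simp at h1
        omega
      · simp only [hc, if_false] at h
        have hLeq : L = hd :: tl := by
          have := congrArg List.tail h
          simpa using this.symm
        have hchain : Chain' Rl L := by
          apply ih
          rw [hL, hLeq]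
        rw [hLeq] at hchain ⊢
        apply List.isChain_cons_cons.mpr
        refine ⟨?_, hchain⟩
        intro habs
        exact hc ((cancel_test x hd).mpr (il_eq_comm.mp habs).symm)


lemma norm_def (x : FreeGroup α) : FreeGroup.norm x = x.toWord.length := rfl

lemma toWord_chain (x : FreeGroup α) : Chain' Rl x.toWord :=
  chain_of_reduce (reduce_toWord x)

lemma toWord_mk_chain {L : List (α × Bool)} (h : Chain' Rl L) : (mk L).toWord = L := by
  rw [toWord_mk, reduce_of_chain h]

lemma toWord_mul_chain {x y : FreeGroup α} (h : Chain' Rl (x.toWord ++ y.toWord)) :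
    (x * y).toWord = x.toWord ++ y.toWord := by
  conv_lhs => rw [← mk_toWord (x := x), ← mk_toWord (x := y)]
  rw [mul_mk, toWord_mk_chain h]

lemma invRev_eq_map (L : List (α × Bool)) : invRev L = (L.map il).reverse := rfl

@[simp] lemma invRev_singleton (p : α × Bool) : invRev [p] = [il p] := rfl

lemma invRev_append (L₁ L₂ : List (α × Bool)) :
    invRev (L₁ ++ L₂) = invRev L₂ ++ invRev L₁ := by
  simp [invRev_eq_map]

lemma head?_invRev (L : List (α × Bool)) : (invRev L).head? = L.getLast?.map il := by
  rw [invRev_eq_map, List.head?_reverse, List.getLast?_map]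

lemma getLast?_invRev (L : List (α × Bool)) : (invRev L).getLast? = L.head?.map il := by
  rw [invRev_eq_map, List.getLast?_reverse, List.head?_map]

lemma chain_invRev {L : List (α × Bool)} (h : Chain' Rl L) : Chain' Rl (invRev L) := by
  rw [invRev_eq_map, Chain', List.isChain_reverse, List.isChain_map]
  refine h.imp ?_
  intro a b hab hc
  simp only [il_il] at hc
  exact hab hc.symm

/-- longest common prefix length -/
def lcp : List (α × Bool) → List (α × Bool) → ℕ
  | a :: A, b :: B => if a = b then lcp A B + 1 else 0
  | _, _ => 0

@[simp] lemma lcp_nil_left (B : List (α × Bool)) : lcp [] B = 0 := by cases B <;> rfl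

@[simp] lemma lcp_nil_right (A : List (α × Bool)) : lcp A [] = 0 := by cases A <;> rfl

lemma lcp_cons (a b : α × Bool) (A B : List (α × Bool)) :
    lcp (a :: A) (b :: B) = if a = b then lcp A B + 1 else 0 := rfl

lemma lcp_comm : ∀ (A B : List (α × Bool)), lcp A B = lcp B A := by
  intro A
  induction A with
  | nil => intro B; simp
  | cons a A ih =>
    intro B
    cases B with
    | nil => simp
    | cons b B =>
      rw [lcp_cons, lcp_cons, ih]
      by_cases h : a = b
      · simp [h]
      · rw [if_neg h, if_neg (fun hc : b = a => h hc.symm)]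

lemma lcp_self : ∀ (A : List (α × Bool)), lcp A A = A.length := by
  intro A
  induction A with
  | nil => simp
  | cons a A ih => rw [lcp_cons]; simp [ih]

lemma lcp_min : ∀ (C A B : List (α × Bool)), min (lcp A C) (lcp C B) ≤ lcp A B := by
  intro C
  induction C with
  | nil => intro A B; simp
  | cons c C ih =>
    intro A B
    cases A with
    | nil => simp
    | cons a A =>
      cases B with
      | nil => simp
      | cons b B =>
        by_cases hac : a = c
        · by_cases hcb : c = b
          · have hab : a = b := hac.trans hcb
            rw [lcp_cons, lcp_cons, lcp_cons, if_pos hac, if_pos hcb, if_pos hab]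
            have := ih A B
            omega
          · rw [lcp_cons (a := c) (b := b), if_neg hcb]
            simp
        · rw [lcp_cons (a := a) (b := c), if_neg hac]
          simp

lemma lcp_split : ∀ (A B : List (α × Bool)), ∃ P A' B' : List (α × Bool),
    A = P ++ A' ∧ B = P ++ B' ∧ P.length = lcp A B ∧
    (∀ a ∈ A'.head?, ∀ b ∈ B'.head?, a ≠ b) := by
  intro A
  induction A with
  | nil =>
    intro B
    exact ⟨[], [], B, by simp, by simp, by simp, by simp⟩
  | cons a A ih =>
    intro B
    cases B with
    | nil => exact ⟨[], a :: A, [], by simp, by simp, by simp, by simp⟩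
    | cons b B =>
      by_cases hab : a = b
      · obtain ⟨P, A', B', h1, h2, h3, h4⟩ := ih B
        refine ⟨a :: P, A', B', by rw [List.cons_append, ← h1], ?_, ?_, h4⟩
        · rw [List.cons_append, ← h2, hab]
        · rw [lcp_cons, if_pos hab]; simp [h3]
      · refine ⟨[], a :: A, b :: B, by simp, by simp, ?_, ?_⟩
        · rw [lcp_cons, if_neg hab]; simp
        · intro x hx y hy
          simp at hx hy
          rw [← hx, ← hy]; exact hab

/-- The key cancellation formula: `|x⁻¹y| = |x| + |y| - 2 lcp(x,y)`. -/
lemma norm_inv_mul (x y : FreeGroup α) :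
    FreeGroup.norm (x⁻¹ * y) + lcp x.toWord y.toWord + lcp x.toWord y.toWord = FreeGroup.norm x + FreeGroup.norm y := by
  obtain ⟨P, A', B', h1, h2, h3, h4⟩ := lcp_split x.toWord y.toWord
  have hcA : Chain' Rl (P ++ A') := h1 ▸ toWord_chain x
  have hcB : Chain' Rl (P ++ B') := h2 ▸ toWord_chain y
  have hA' : Chain' Rl A' := (List.isChain_append.mp hcA).2.1
  have hB' : Chain' Rl B' := (List.isChain_append.mp hcB).2.1
  have hx : x = mk P * mk A' := by
    rw [mul_mk, ← h1, mk_toWord]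
  have hy : y = mk P * mk B' := by
    rw [mul_mk, ← h2, mk_toWord]
  have hxy : x⁻¹ * y = mk (invRev A' ++ B') := by
    rw [hx, hy, mul_inv_rev, inv_mk, mul_assoc, inv_mul_cancel_left, ← mul_mk]
  have hchain : Chain' Rl (invRev A' ++ B') := by
    rw [Chain', List.isChain_append]
    refine ⟨chain_invRev hA', hB', ?_⟩
    intro p hp q hq
    rw [getLast?_invRev] at hp
    simp only [Option.mem_def, Option.map_eq_some_iff] at hp
    obtain ⟨a, ha, rfl⟩ := hp
    intro hc
    simp only [il_il] at hc
    exact h4 a ha q hq hc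
  have hnorm : FreeGroup.norm (x⁻¹ * y) = A'.length + B'.length := by
    rw [hxy]
    show (mk (invRev A' ++ B')).toWord.length = _
    rw [toWord_mk_chain hchain]
    simp [invRev_length]
  have hnx : FreeGroup.norm x = P.length + A'.length := by
    show x.toWord.length = _
    rw [h1]; simp
  have hny : FreeGroup.norm y = P.length + B'.length := by
    show y.toWord.length = _
    rw [h2]; simp
  rw [hnorm, hnx, hny, ← h3]
  omega

/-- cyclically-reduced wrap condition -/
def Wrap (C : List (α × Bool)) : Prop := ∀ p ∈ C.getLast?, ∀ q ∈ C.head?, Rl p q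

/-- `n`-fold concatenation -/
def cN (n : ℕ) (C : List (α × Bool)) : List (α × Bool) := (List.replicate n C).flatten

@[simp] lemma cN_zero (C : List (α × Bool)) : cN 0 C = [] := rfl

lemma cN_succ (n : ℕ) (C : List (α × Bool)) : cN (n + 1) C = C ++ cN n C := by
  simp [cN, List.replicate_succ]

@[simp] lemma length_cN (n : ℕ) (C : List (α × Bool)) : (cN n C).length = n * C.length := by
  induction n with
  | zero => simp
  | succ n ih => rw [cN_succ]; simp [ih, Nat.succ_mul, Nat.add_comm]

lemma cN_ne_nil {C : List (α × Bool)} (hC : C ≠ []) {n : ℕ} (hn : 1 ≤ n) :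
    cN n C ≠ [] := by
  intro h
  have : (cN n C).length = 0 := by rw [h]; rfl
  rw [length_cN] at this
  have hC' : C.length ≠ 0 := fun h0 => hC (List.length_eq_zero_iff.mp h0)
  have h1 : n * C.length ≠ 0 := Nat.mul_ne_zero (by omega) hC'
  exact h1 this

lemma head?_cN {C : List (α × Bool)} (hC : C ≠ []) {n : ℕ} (hn : 1 ≤ n) :
    (cN n C).head? = C.head? := by
  obtain ⟨m, rfl⟩ : ∃ m, n = m + 1 := ⟨n - 1, by omega⟩
  rw [cN_succ]
  cases C with
  | nil => exact absurd rfl hC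
  | cons c C => simp

lemma getLast?_cN {C : List (α × Bool)} (hC : C ≠ []) : ∀ {n : ℕ}, 1 ≤ n →
    (cN n C).getLast? = C.getLast? := by
  intro n
  induction n with
  | zero => omega
  | succ m ih =>
    intro _
    rw [cN_succ]
    by_cases hm : 1 ≤ m
    · rw [List.getLast?_append_of_ne_nil _ (cN_ne_nil hC hm), ih hm]
    · have : m = 0 := by omega
      subst this
      simp

lemma chain_cN {C : List (α × Bool)} (hc : Chain' Rl C) (hw : Wrap C) :
    ∀ n, Chain' Rl (cN n C) := by
  intro n
  induction n with
  | zero => exact List.isChain_nil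
  | succ m ih =>
    rw [cN_succ, Chain', List.isChain_append]
    refine ⟨hc, ih, ?_⟩
    intro p hp q hq
    by_cases hm : 1 ≤ m
    · by_cases hC : C = []
      · subst hC; simp at hp
      · rw [head?_cN hC hm] at hq
        exact hw p hp q hq
    · have : m = 0 := by omega
      subst this
      simp at hq

lemma wrap_cN {C : List (α × Bool)} (hC : C ≠ []) (hw : Wrap C) {n : ℕ} (hn : 1 ≤ n) :
    Wrap (cN n C) := by
  intro p hp q hq
  rw [getLast?_cN hC hn] at hp
  rw [head?_cN hC hn] at hq
  exact hw p hp q hq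

lemma wrap_invRev {C : List (α × Bool)} (hw : Wrap C) : Wrap (invRev C) := by
  intro p hp q hq
  rw [getLast?_invRev] at hp
  rw [head?_invRev] at hq
  simp only [Option.mem_def, Option.map_eq_some_iff] at hp hq
  obtain ⟨a, ha, rfl⟩ := hp
  obtain ⟨b, hb, rfl⟩ := hq
  have h2 := hw b hb a ha
  intro hcon
  simp only [il_il] at hcon
  exact h2 hcon.symm

lemma toWord_pow (c : FreeGroup α) (hw : Wrap c.toWord) (n : ℕ) :
    (c ^ n).toWord = cN n c.toWord := by
  conv_lhs => rw [← mk_toWord (x := c)]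
  rw [pow_mk]
  exact toWord_mk_chain (chain_cN (toWord_chain c) hw n)

lemma norm_pos_of_ne_one {c : FreeGroup α} (hc : c ≠ 1) : 1 ≤ FreeGroup.norm c := by
  have := (FreeGroup.norm_eq_zero (x := c)).not.mpr hc
  omega

lemma toWord_ne_nil {c : FreeGroup α} (hc : c ≠ 1) : c.toWord ≠ [] := by
  intro h
  exact hc (toWord_eq_nil_iff.mp h)

/-- powers of a conjugate of a cyclically reduced element: exact word structure -/
lemma conj_pow_word {y w c : FreeGroup α} (hy : y = w * c * w⁻¹)
    (hword : y.toWord = w.toWord ++ c.toWord ++ invRev w.toWord)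
    (hwrap : Wrap c.toWord) (hc : c ≠ 1) {n : ℕ} (hn : 1 ≤ n) :
    (y ^ n).toWord = w.toWord ++ cN n c.toWord ++ invRev w.toWord := by
  have hCne : c.toWord ≠ [] := toWord_ne_nil hc
  have hch : Chain' Rl (w.toWord ++ c.toWord ++ invRev w.toWord) := hword ▸ toWord_chain y
  obtain ⟨hch1, hchIW, hj2⟩ := List.isChain_append.mp hch
  obtain ⟨hchW, hchC, hj1⟩ := List.isChain_append.mp hch1
  have hchain2 : Chain' Rl (w.toWord ++ cN n c.toWord ++ invRev w.toWord) := by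
    rw [Chain', List.isChain_append]
    refine ⟨?_, hchIW, ?_⟩
    · rw [List.isChain_append]
      refine ⟨hchW, chain_cN hchC hwrap n, ?_⟩
      intro p hp q hq
      rw [head?_cN hCne hn] at hq
      exact hj1 p hp q hq
    · intro p hp q hq
      rw [List.getLast?_append_of_ne_nil _ (cN_ne_nil hCne hn), getLast?_cN hCne hn] at hp
      apply hj2 p _ q hq
      rw [List.getLast?_append_of_ne_nil _ hCne]
      exact hp
  have hyn : y ^ n = w * c ^ n * w⁻¹ := by rw [hy, conj_pow]
  rw [hyn]
  have htc : (c ^ n).toWord = cN n c.toWord := toWord_pow c hwrap n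
  have h1 : (w * c ^ n).toWord = w.toWord ++ cN n c.toWord := by
    rw [toWord_mul_chain, htc]
    rw [htc]
    exact (List.isChain_append.mp hchain2).1
  rw [toWord_mul_chain, h1, toWord_inv]
  rw [h1, toWord_inv]
  exact hchain2

lemma conj_pow_norm {y w c : FreeGroup α} (hy : y = w * c * w⁻¹)
    (hword : y.toWord = w.toWord ++ c.toWord ++ invRev w.toWord)
    (hwrap : Wrap c.toWord) (hc : c ≠ 1) {n : ℕ} (hn : 1 ≤ n) :
    FreeGroup.norm (y ^ n) = 2 * FreeGroup.norm w + n * FreeGroup.norm c := by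
  have h1 := conj_pow_word hy hword hwrap hc hn
  rw [norm_def, h1, norm_def, norm_def]
  simp [invRev_length]
  omega

/-- existence of a cyclically reduced decomposition -/
lemma exists_decomp_aux : ∀ (n : ℕ) (y : FreeGroup α), y.toWord.length ≤ n → y ≠ 1 →
    ∃ w c : FreeGroup α, y = w * c * w⁻¹ ∧
      y.toWord = w.toWord ++ c.toWord ++ invRev w.toWord ∧ Wrap c.toWord ∧ c ≠ 1 := by
  intro n
  induction n with
  | zero =>
    intro y hlen hy
    exact absurd (toWord_eq_nil_iff.mp (List.length_eq_zero_iff.mp (Nat.le_zero.mp hlen))) hy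
  | succ n ih =>
    intro y hlen hy
    by_cases hw : Wrap y.toWord
    · refine ⟨1, y, by group, ?_, hw, hy⟩
      simp [toWord_one, invRev]
    · -- Wrap fails: strip a letter
      simp only [Wrap] at hw
      push_neg at hw
      obtain ⟨p, hp, q, hq, hpq⟩ := hw
      simp only [Rl, not_not] at hpq
      -- hpq : il p = q
      set L := y.toWord with hL
      have hLne : L ≠ [] := toWord_ne_nil hy
      have hq' : L.head? = some q := hq
      have hp' : L.getLast? = some p := hp
      have hlen2 : 2 ≤ L.length := by
        rcases L with _ | ⟨a, M⟩
        · exact absurd rfl hLne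
        · rcases M with _ | ⟨b, M'⟩
          · simp at hq' hp'
            have hpq2 : p = q := by rw [← hp', ← hq']
            rw [← hpq2] at hpq
            exact absurd hpq (il_ne p)
          · simp
      have hpil : il q = p := il_eq_comm.mp hpq
      obtain ⟨T, hT⟩ : ∃ T, L = q :: T := by
        rcases hLc : L with _ | ⟨a, M₀⟩
        · exact absurd rfl (hLc ▸ hLne)
        · rw [hLc] at hq'; simp at hq'; exact ⟨M₀, by rw [hq']⟩
      have hTne : T ≠ [] := by
        intro h; rw [h] at hT; rw [hT] at hlen2; simp at hlen2
      obtain ⟨M, p', hT2⟩ := (List.eq_nil_or_concat T).resolve_left hTne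
      have hp'' : p' = p := by
        have hgl : L.getLast? = some p' := by
          rw [hT, hT2, List.concat_eq_append, ← List.cons_append]
          exact List.getLast?_concat
        rw [hp'] at hgl; exact (Option.some_inj.mp hgl).symm
      rw [hp''] at hT2
      have hLdec : L = q :: (M ++ [p]) := by rw [hT, hT2, List.concat_eq_append]
      -- the element y and its core y'
      set y' : FreeGroup α := mk M with hy'
      have hysplit : y = mk [q] * y' * (mk [q])⁻¹ := by
        have h1 : y = mk L := (mk_toWord).symm
        rw [h1, hLdec, inv_mk, hy', mul_mk, mul_mk]
        congr 1
        simp [invRev_singleton, hpil]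
      have hchainL : Chain' Rl (q :: (M ++ [p])) := hLdec ▸ toWord_chain y
      have hchainM : Chain' Rl M := by
        have h2 := (List.isChain_cons.mp hchainL).2
        exact (List.isChain_append.mp h2).1
      have hMword : y'.toWord = M := toWord_mk_chain hchainM
      have hy'ne : y' ≠ 1 := by
        intro h
        apply hy
        rw [hysplit, h, mul_one, mul_inv_cancel]
      have hMlen : M.length ≤ n := by
        have := congrArg List.length hLdec
        simp at this
        omega
      obtain ⟨w', c, hconj, hword, hwrap, hcne⟩ := ih y' (by rw [toWord_mk_chain hchainM]; exact hMlen) hy'ne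
      have hMne : M ≠ [] := fun h => hy'ne (toWord_eq_nil_iff.mp (by rw [hMword, h]))
      refine ⟨mk [q] * w', c, ?_, ?_, hwrap, hcne⟩
      · rw [hysplit, hconj]
        group
      · -- word equation
        have hWw : (mk [q] * w').toWord = [q] ++ w'.toWord := by
          by_cases hw1 : w' = 1
          · rw [hw1, mul_one, toWord_one]
            simpa using toWord_mk_chain (List.isChain_singleton q)
          · have hW'ne : w'.toWord ≠ [] := toWord_ne_nil hw1
            have hhead : M.head? = w'.toWord.head? := by
              rw [← hMword, hword]
              rcases hW : w'.toWord with _ | ⟨a, W₀⟩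
              · exact absurd hW hW'ne
              · simp
            have hjunc : ∀ h ∈ w'.toWord.head?, Rl q h := by
              intro h hh
              have h3 := (List.isChain_cons.mp hchainL).1
              rw [← hhead] at hh
              rcases hM : M with _ | ⟨m₀, M₀⟩
              · exact absurd hM hMne
              · rw [hM] at hh
                simp at hh
                subst hh
                apply h3
                rw [hM]
                simp
            have hch2 : Chain' Rl ([q] ++ w'.toWord) := by
              rw [Chain', List.isChain_append]
              exact ⟨List.isChain_singleton q, toWord_chain w', by simpa using hjunc⟩
            conv_lhs => rw [← mk_toWord (x := w'), mul_mk]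
            exact toWord_mk_chain hch2
        have hM2 : M = w'.toWord ++ c.toWord ++ invRev w'.toWord := by
          rw [← hMword, hword]
        rw [hWw]
        show L = _
        rw [hLdec, hM2]
        rw [invRev_append, invRev_singleton, hpil]
        simp [List.append_assoc]

/-- the packaged decomposition -/
lemma exists_decomp (y : FreeGroup α) (hy : y ≠ 1) :
    ∃ w c : FreeGroup α, y = w * c * w⁻¹ ∧
      y.toWord = w.toWord ++ c.toWord ++ invRev w.toWord ∧ Wrap c.toWord ∧ c ≠ 1 :=
  exists_decomp_aux y.toWord.length y le_rfl hy

lemma il_inj {a b : α × Bool} (h : il a = il b) : a = b := by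
  have := congrArg il h
  simpa using this

/-- word structure of an integer power of a cyclically reduced element -/
lemma zpow_core_word (c : FreeGroup α) (hwrap : Wrap c.toWord) (hc : c ≠ 1)
    (A : ℤ) (hA : A ≠ 0) :
    (c ^ A).toWord ≠ [] ∧ Chain' Rl (c ^ A).toWord ∧ Wrap (c ^ A).toWord ∧
      ((c ^ A).toWord.head? = c.toWord.head? ∨
        (c ^ A).toWord.head? = c.toWord.getLast?.map il) := by
  have hCne : c.toWord ≠ [] := toWord_ne_nil hc
  rcases lt_trichotomy A 0 with hneg | hzero | hpos
  · obtain ⟨m, hm⟩ : ∃ m : ℕ, A = -(m : ℤ) := ⟨A.natAbs, by omega⟩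
    have hm1 : 1 ≤ m := by omega
    have h1 : c ^ A = (c ^ m)⁻¹ := by rw [hm, zpow_neg, zpow_natCast]
    have h2 : (c ^ A).toWord = invRev (cN m c.toWord) := by
      rw [h1, toWord_inv, toWord_pow c hwrap m]
    refine ⟨?_, ?_, ?_, Or.inr ?_⟩
    · rw [h2]
      intro hcon
      have := congrArg List.length hcon
      rw [invRev_length, length_cN] at this
      simp at this
      rcases this with h | h
      · omega
      · exact hc h
    · rw [h2]
      exact chain_invRev (chain_cN (toWord_chain c) hwrap m)
    · rw [h2]
      exact wrap_invRev (wrap_cN hCne hwrap hm1)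
    · rw [h2, head?_invRev, getLast?_cN hCne hm1]
  · exact absurd hzero hA
  · obtain ⟨m, hm⟩ : ∃ m : ℕ, A = (m : ℤ) := ⟨A.natAbs, by omega⟩
    have hm1 : 1 ≤ m := by omega
    have h2 : (c ^ A).toWord = cN m c.toWord := by
      rw [hm, zpow_natCast, toWord_pow c hwrap m]
    refine ⟨?_, ?_, ?_, Or.inl ?_⟩
    · rw [h2]; exact cN_ne_nil hCne hm1
    · rw [h2]; exact chain_cN (toWord_chain c) hwrap m
    · rw [h2]; exact wrap_cN hCne hwrap hm1
    · rw [h2, head?_cN hCne hm1]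

lemma pick_letter [Fintype α] (hcard : 2 ≤ Fintype.card α) (a b e : α × Bool) :
    ∃ g : α × Bool, g ≠ a ∧ g ≠ b ∧ g ≠ e := by
  by_contra h
  push_neg at h
  have hsub : (Finset.univ : Finset (α × Bool)) ⊆ {a, b, e} := by
    intro g _
    by_cases h1 : g = a
    · simp [h1]
    · by_cases h2 : g = b
      · simp [h2]
      · have h3 := h g h1 h2
        simp [h3]
  have h1 := Finset.card_le_card hsub
  have h2 : ({a, b, e} : Finset (α × Bool)).card ≤ 3 :=
    (Finset.card_insert_le _ _).trans (by
      have := Finset.card_insert_le b ({e} : Finset (α × Bool))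
      simp at this ⊢
      omega)
  rw [Finset.card_univ, Fintype.card_prod, Fintype.card_bool] at h1
  omega

@[simp] lemma invRev_pair (a b : α × Bool) : invRev [a, b] = [il b, il a] := rfl

/-- Key non-degeneracy: a suitable conjugator `u` such that `γ^{A₂}` can never equal
`(uγu⁻¹)^{A₁}`. -/
lemma key_ne [Fintype α] (hcard : 2 ≤ Fintype.card α) (γ : FreeGroup α) (hγ : γ ≠ 1)
    (A₁ : ℤ) (hA₁ : A₁ ≠ 0) :
    ∃ u : FreeGroup α, ∀ A₂ : ℤ, γ ^ A₂ ≠ (u * γ * u⁻¹) ^ A₁ := by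
  obtain ⟨w, c, hconj, hword, hwrap, hcne⟩ := exists_decomp γ hγ
  have hCne : c.toWord ≠ [] := toWord_ne_nil hcne
  obtain ⟨hDne, hDchain, hDwrap, hDhead⟩ := zpow_core_word c hwrap hcne A₁ hA₁
  set D := (c ^ A₁).toWord with hD
  obtain ⟨ch, hch⟩ : ∃ z, c.toWord.head? = some z := by
    rcases hx : c.toWord.head? with _ | z
    · exact absurd (List.head?_eq_none_iff.mp hx) hCne
    · exact ⟨z, rfl⟩
  obtain ⟨cl, hcl⟩ : ∃ z, c.toWord.getLast? = some z := by
    rcases hx : c.toWord.getLast? with _ | z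
    · exact absurd (List.getLast?_eq_none_iff.mp hx) hCne
    · exact ⟨z, rfl⟩
  obtain ⟨dh, hdh⟩ : ∃ z, D.head? = some z := by
    rcases hx : D.head? with _ | z
    · exact absurd (List.head?_eq_none_iff.mp hx) hDne
    · exact ⟨z, rfl⟩
  obtain ⟨dl, hdl⟩ : ∃ z, D.getLast? = some z := by
    rcases hx : D.getLast? with _ | z
    · exact absurd (List.getLast?_eq_none_iff.mp hx) hDne
    · exact ⟨z, rfl⟩
  obtain ⟨g₁, hg₁a, hg₁b, _⟩ := pick_letter hcard ch (il cl) (il cl)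
  obtain ⟨g₂, hg₂a, hg₂b, hg₂c⟩ := pick_letter hcard (il g₁) (il dh) dl
  set v : FreeGroup α := mk [g₁, g₂] with hv
  refine ⟨w * v * w⁻¹, ?_⟩
  intro A₂ hcon
  have hγm : ∀ m : ℤ, γ ^ m = w * c ^ m * w⁻¹ := by
    intro m; rw [hconj, conj_zpow]
  have hu : (w * v * w⁻¹ * γ * (w * v * w⁻¹)⁻¹) ^ A₁ = w * (v * c ^ A₁ * v⁻¹) * w⁻¹ := by
    rw [hconj]
    rw [show w * v * w⁻¹ * (w * c * w⁻¹) * (w * v * w⁻¹)⁻¹ =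
      w * (v * c * v⁻¹) * w⁻¹ by group]
    rw [conj_zpow, conj_zpow]
  rw [hγm A₂, hu] at hcon
  have hcore : c ^ A₂ = v * c ^ A₁ * v⁻¹ :=
    mul_left_cancel (mul_right_cancel hcon)
  -- chain condition for the conjugated core word
  have hchainM : Chain' Rl ([g₁, g₂] ++ D ++ [il g₂, il g₁]) := by
    rw [Chain', List.isChain_append, List.isChain_append]
    refine ⟨⟨List.isChain_pair.mpr (fun h => hg₂a h.symm), hDchain, ?_⟩,
      List.isChain_pair.mpr ?_, ?_⟩
    · intro p hp q hq
      simp at hp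
      rw [hdh] at hq
      simp at hq
      subst hp
      subst hq
      exact fun h => hg₂b (il_eq_comm.mp h).symm
    · show il (il g₂) ≠ il g₁
      rw [il_il]
      exact hg₂a
    · intro p hp q hq
      rw [List.getLast?_append_of_ne_nil _ hDne, hdl] at hp
      simp at hp hq
      subst hp
      subst hq
      exact fun h => hg₂c (il_inj h).symm
  have hRHSword : (v * c ^ A₁ * v⁻¹).toWord = [g₁, g₂] ++ D ++ [il g₂, il g₁] := by
    have hmk : v * c ^ A₁ * v⁻¹ = mk ([g₁, g₂] ++ D ++ [il g₂, il g₁]) := by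
      rw [hv, inv_mk, invRev_pair]
      conv_lhs => rw [← mk_toWord (x := c ^ A₁)]
      rw [mul_mk, mul_mk, ← hD]
    rw [hmk, toWord_mk_chain hchainM]
  rcases eq_or_ne A₂ 0 with rfl | hA₂
  · rw [zpow_zero] at hcore
    have h1 := congrArg FreeGroup.toWord hcore
    rw [toWord_one, hRHSword] at h1
    simp at h1
  · obtain ⟨hEne, _, _, hEhead⟩ := zpow_core_word c hwrap hcne A₂ hA₂
    have h1 := congrArg FreeGroup.toWord hcore
    rw [hRHSword] at h1
    have h2 := congrArg List.head? h1
    simp at h2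
    rcases hEhead with h | h
    · rw [h, hch] at h2
      simp at h2
      exact hg₁a h2.symm
    · rw [h, hcl] at h2
      simp at h2
      exact hg₁b h2.symm

end FGW

namespace TR
open FreeGroup FGW WD

variable {α : Type*} [DecidableEq α] {S : Set (FreeGroup α)}

lemma exists_K2 (hS : FinSymGen S) : ∃ K₂ : ℕ, 1 ≤ K₂ ∧ ∀ s ∈ S, FreeGroup.norm s ≤ K₂ := by
  have hfin : (FreeGroup.norm '' S).Finite := hS.1.image _
  obtain ⟨B, hB⟩ := hfin.bddAbove
  refine ⟨B + 1, by omega, ?_⟩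
  intro s hs
  have := hB (Set.mem_image_of_mem FreeGroup.norm hs)
  omega

lemma norm_le_K2_wl (hS : FinSymGen S) {K₂ : ℕ} (hK₂ : ∀ s ∈ S, FreeGroup.norm s ≤ K₂)
    (g : FreeGroup α) : FreeGroup.norm g ≤ K₂ * wordLength S g := by
  obtain ⟨l, h₁, h₂, h₃⟩ := wl_spec hS g
  rw [← h₂, ← h₃]
  clear h₂ h₃
  induction l with
  | nil => simp [FreeGroup.norm_one]
  | cons s l ih =>
    have h₄ : ∀ t ∈ l, t ∈ S := fun t ht => h₁ t (List.mem_cons_of_mem s ht)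
    have h₅ := ih h₄
    have h₆ : FreeGroup.norm (s * l.prod) ≤ FreeGroup.norm s + FreeGroup.norm l.prod := FreeGroup.norm_mul_le _ _
    have h₇ : FreeGroup.norm s ≤ K₂ := hK₂ s (h₁ s List.mem_cons_self)
    simp only [List.prod_cons, List.length_cons]
    calc FreeGroup.norm (s * l.prod) ≤ K₂ + K₂ * l.length := by omega
    _ = K₂ * (l.length + 1) := by ring

lemma exists_K1 [Fintype α] (hS : FinSymGen S) :
    ∃ K₁ : ℕ, 1 ≤ K₁ ∧ ∀ g : FreeGroup α, wordLength S g ≤ K₁ * FreeGroup.norm g := by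
  classical
  set K₀ : ℕ := Finset.univ.sup (fun i : α => wordLength S (FreeGroup.of i)) with hK₀
  refine ⟨K₀ + 1, by omega, ?_⟩
  have haux : ∀ L : List (α × Bool), wordLength S (mk L) ≤ (K₀ + 1) * L.length := by
    intro L
    induction L with
    | nil =>
      have : (mk ([] : List (α × Bool))) = 1 := by rw [← one_eq_mk]
      rw [this, wl_one]
      omega
    | cons p L ih =>
      have hsplit : mk (p :: L) = mk [p] * mk L := by rw [mul_mk]; rfl
      have h₁ : wordLength S (mk [p]) ≤ K₀ := by
        rcases p with ⟨i, b⟩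
        cases b
        · have : mk [(i, false)] = (FreeGroup.of i)⁻¹ := by
            rw [show FreeGroup.of i = mk [(i, true)] from rfl, inv_mk]
            rfl
          rw [this, wl_inv hS, hK₀]
          exact Finset.le_sup (f := fun i : α => wordLength S (FreeGroup.of i)) (Finset.mem_univ i)
        · have : mk [(i, true)] = FreeGroup.of i := rfl
          rw [this, hK₀]
          exact Finset.le_sup (f := fun i : α => wordLength S (FreeGroup.of i)) (Finset.mem_univ i)
      calc wordLength S (mk (p :: L)) ≤ wordLength S (mk [p]) + wordLength S (mk L) := by
            rw [hsplit]; exact wl_mul hS _ _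
      _ ≤ K₀ + (K₀ + 1) * L.length := by omega
      _ ≤ (K₀ + 1) * (p :: L).length := by simp [List.length_cons]; ring_nf; omega
  intro g
  have := haux g.toWord
  rw [mk_toWord] at this
  exact this.trans (by rw [norm_def])

lemma chain_transfer (hS : FinSymGen S) {K₂ : ℕ} (hK₂ : ∀ s ∈ S, FreeGroup.norm s ≤ K₂) :
    ∀ (l : List (FreeGroup α)), (∀ s ∈ l, s ∈ S) → ∀ (a : FreeGroup α),
    ∃ g : FreeGroup α, FreeGroup.norm g ≤ lcp a.toWord (a * l.prod).toWord + K₂ ∧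
      wordLength S a + wordLength S (a * l.prod) ≤ 2 * wordLength S g + l.length := by
  intro l
  induction l with
  | nil =>
    intro _ a
    refine ⟨a, ?_, ?_⟩
    · rw [List.prod_nil, mul_one, lcp_self, norm_def]
      omega
    · rw [List.prod_nil, mul_one]
      omega
  | cons s l ih =>
    intro hmem a
    have hs : s ∈ S := hmem s List.mem_cons_self
    have hl : ∀ t ∈ l, t ∈ S := fun t ht => hmem t (List.mem_cons_of_mem s ht)
    obtain ⟨g', hg1, hg2⟩ := ih hl (a * s)
    have hprod : a * (s :: l).prod = a * s * l.prod := by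
      rw [List.prod_cons, mul_assoc]
    have hmin := lcp_min (a * s).toWord a.toWord (a * s * l.prod).toWord
    have hE := norm_inv_mul a (a * s)
    have hsimp : a⁻¹ * (a * s) = s := by group
    rw [hsimp] at hE
    have hnorms : FreeGroup.norm s ≤ K₂ := hK₂ s hs
    have htri : FreeGroup.norm a ≤ FreeGroup.norm (a * s) + FreeGroup.norm s := by
      have h1 : a = (a * s) * s⁻¹ := by group
      calc FreeGroup.norm a = FreeGroup.norm ((a * s) * s⁻¹) := by rw [← h1]
      _ ≤ FreeGroup.norm (a * s) + FreeGroup.norm s⁻¹ := FreeGroup.norm_mul_le _ _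
      _ = FreeGroup.norm (a * s) + FreeGroup.norm s := by rw [FreeGroup.norm_inv_eq]
    have hwla : wordLength S a ≤ wordLength S (a * s) + 1 := by
      have h1 : a = (a * s) * s⁻¹ := by group
      calc wordLength S a = wordLength S ((a * s) * s⁻¹) := by rw [← h1]
      _ ≤ wordLength S (a * s) + wordLength S s⁻¹ := wl_mul hS _ _
      _ ≤ wordLength S (a * s) + 1 := by
          have := wl_single hS (hS.2.1 s hs)
          omega
    by_cases hcase : lcp a.toWord (a * s).toWord ≤ lcp (a * s).toWord (a * s * l.prod).toWord
    · refine ⟨a, ?_, ?_⟩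
      · rw [hprod]
        have h3 : lcp a.toWord (a * s).toWord ≤ lcp a.toWord (a * s * l.prod).toWord := by
          rw [min_eq_left hcase] at hmin
          exact hmin
        omega
      · rw [hprod]
        have h5 := wl_mul hS a (s :: l).prod
        rw [hprod] at h5
        have h6 := wl_le (g := (s :: l).prod) (l := s :: l) hmem rfl
        simp only [List.length_cons] at h6 ⊢
        omega
    · have hcase' : lcp (a * s).toWord (a * s * l.prod).toWord ≤ lcp a.toWord (a * s).toWord :=
        le_of_not_ge hcase
      refine ⟨g', ?_, ?_⟩
      · rw [hprod]
        have h3 : lcp (a * s).toWord (a * s * l.prod).toWord ≤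
            lcp a.toWord (a * s * l.prod).toWord := by
          rw [min_eq_right hcase'] at hmin
          exact hmin
        omega
      · rw [hprod]
        simp only [List.length_cons]
        omega

lemma transfer (hS : FinSymGen S) {K₁ K₂ : ℕ} (hK₂ : ∀ s ∈ S, FreeGroup.norm s ≤ K₂)
    (hK₁ : ∀ g : FreeGroup α, wordLength S g ≤ K₁ * FreeGroup.norm g) (a b : FreeGroup α) :
    wordLength S a + wordLength S b ≤
      2 * (K₁ * (lcp a.toWord b.toWord + K₂)) + wordLength S (a⁻¹ * b) := by
  obtain ⟨l, h₁, h₂, h₃⟩ := wl_spec hS (a⁻¹ * b)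
  have hab : a * l.prod = b := by rw [h₃]; group
  obtain ⟨g, hg1, hg2⟩ := chain_transfer hS hK₂ l h₁ a
  rw [hab] at hg1 hg2
  have h4 : wordLength S g ≤ K₁ * (lcp a.toWord b.toWord + K₂) :=
    (hK₁ g).trans (Nat.mul_le_mul_left _ hg1)
  omega

lemma no_equidistant_orbit [Fintype α] (hS : FinSymGen S) (y : FreeGroup α) (hy : y ≠ 1)
    (H : ∀ k : ℕ, 1 ≤ k → ∃ p : FreeGroup α,
      wordLength S (p⁻¹ * y ^ k) = wordLength S p ∧
      wordLength S (p⁻¹ * (y⁻¹) ^ k) = wordLength S p) : False := by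
  classical
  obtain ⟨K₂, hK₂1, hK₂⟩ := exists_K2 hS
  obtain ⟨K₁, hK₁1, hK₁⟩ := exists_K1 hS
  obtain ⟨w, c, hconj, hword, hwrap, hcne⟩ := exists_decomp y hy
  set W := FreeGroup.norm w with hW
  set NC := FreeGroup.norm c with hNC'
  have hNC : 1 ≤ NC := norm_pos_of_ne_one hcne
  set k := K₂ * (2 * (K₁ * (W + K₂))) + 1 with hk
  have hk1 : 1 ≤ k := by omega
  obtain ⟨p, hp1, hp2⟩ := H k hk1
  have hn1 : FreeGroup.norm (y ^ k) = 2 * W + k * NC := conj_pow_norm hconj hword hwrap hcne hk1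
  have hn2 : FreeGroup.norm (y ^ (2 * k)) = 2 * W + (2 * k) * NC :=
    conj_pow_norm hconj hword hwrap hcne (by omega)
  have hinvpow : (y⁻¹) ^ k = (y ^ k)⁻¹ := by rw [inv_pow]
  have hn3 : FreeGroup.norm ((y⁻¹) ^ k) = FreeGroup.norm (y ^ k) := by rw [hinvpow, FreeGroup.norm_inv_eq]
  have hprod : (y ^ k)⁻¹ * (y⁻¹) ^ k = (y ^ (2 * k))⁻¹ := by
    rw [hinvpow, ← mul_inv_rev, ← pow_add]
    congr 2
    omega
  have hE := norm_inv_mul (y ^ k) ((y⁻¹) ^ k)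
  rw [hprod, FreeGroup.norm_inv_eq, hn2, hn3, hn1] at hE
  have hlcpW : lcp (y ^ k).toWord ((y⁻¹) ^ k).toWord = W := by
    have h2k : 2 * k * NC = k * NC + k * NC := by ring
    omega
  have hwleq1 : wordLength S ((y ^ k)⁻¹ * p) = wordLength S p := by
    have h1 : ((y ^ k)⁻¹ * p)⁻¹ = p⁻¹ * y ^ k := by group
    rw [← wl_inv hS ((y ^ k)⁻¹ * p), h1, hp1]
  have ht1 := transfer hS hK₂ hK₁ (y ^ k) p
  rw [hwleq1] at ht1
  have hb1 : wordLength S (y ^ k) ≤ 2 * (K₁ * (lcp (y ^ k).toWord p.toWord + K₂)) := by omega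
  have hwleq2 : wordLength S (((y⁻¹) ^ k)⁻¹ * p) = wordLength S p := by
    have h1 : (((y⁻¹) ^ k)⁻¹ * p)⁻¹ = p⁻¹ * (y⁻¹) ^ k := by group
    rw [← wl_inv hS (((y⁻¹) ^ k)⁻¹ * p), h1, hp2]
  have ht2 := transfer hS hK₂ hK₁ ((y⁻¹) ^ k) p
  rw [hwleq2] at ht2
  have hb2 : wordLength S ((y⁻¹) ^ k) ≤
      2 * (K₁ * (lcp ((y⁻¹) ^ k).toWord p.toWord + K₂)) := by omega
  have hmin := lcp_min p.toWord (y ^ k).toWord ((y⁻¹) ^ k).toWord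
  rw [hlcpW, lcp_comm p.toWord ((y⁻¹) ^ k).toWord] at hmin
  have hlow : FreeGroup.norm (y ^ k) ≤ K₂ * wordLength S (y ^ k) := norm_le_K2_wl hS hK₂ _
  have hwlinv : wordLength S ((y⁻¹) ^ k) = wordLength S (y ^ k) := by
    rw [hinvpow, wl_inv hS]
  have hkNC : k ≤ k * NC := Nat.le_mul_of_pos_right k (by omega)
  have h7 : k ≤ K₂ * wordLength S (y ^ k) := by
    have : k ≤ FreeGroup.norm (y ^ k) := by omega
    omega
  rcases le_total (lcp (y ^ k).toWord p.toWord) (lcp ((y⁻¹) ^ k).toWord p.toWord) with hc | hc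
  · have h5 : lcp (y ^ k).toWord p.toWord ≤ W := by
      rw [min_eq_left hc] at hmin
      exact hmin
    have h8 : K₁ * (lcp (y ^ k).toWord p.toWord + K₂) ≤ K₁ * (W + K₂) :=
      Nat.mul_le_mul_left _ (by omega)
    have h6 : wordLength S (y ^ k) ≤ 2 * (K₁ * (W + K₂)) := by omega
    have h9 : K₂ * wordLength S (y ^ k) ≤ K₂ * (2 * (K₁ * (W + K₂))) :=
      Nat.mul_le_mul_left _ h6
    omega
  · have h5 : lcp ((y⁻¹) ^ k).toWord p.toWord ≤ W := by
      rw [min_eq_right hc] at hmin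
      exact hmin
    have h8 : K₁ * (lcp ((y⁻¹) ^ k).toWord p.toWord + K₂) ≤ K₁ * (W + K₂) :=
      Nat.mul_le_mul_left _ (by omega)
    have h6 : wordLength S (y ^ k) ≤ 2 * (K₁ * (W + K₂)) := by omega
    have h9 : K₂ * wordLength S (y ^ k) ≤ K₂ * (2 * (K₁ * (W + K₂))) :=
      Nat.mul_le_mul_left _ h6
    omega

end TR


/-- For any Cayley graph of the free group of rank `d ≥ 2` and
any metric functional `f` in its boundary, the pointwise stabilizer of the orbit
of `f` is trivial. -/
theorem freeGroup_orbit_pointwise_stabilizer_trivial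
    {d : ℕ} (hd : 2 ≤ d) (S : Set (FreeGroup (Fin d))) (hS : FinSymGen S)
    (f : FreeGroup (Fin d) → ℝ) (hf : InBoundary (wordDist S) f) :
    {x : FreeGroup (Fin d) |
        ∀ g : FreeGroup (Fin d), act x (act g f) = act g f} = {1} := by
  classical
  apply Set.eq_singleton_iff_unique_mem.mpr
  constructor
  · show ∀ g : FreeGroup (Fin d), act 1 (act g f) = act g f
    intro g
    funext z
    simp [act]
  · intro x hx
    simp only [Set.mem_setOf_eq] at hx
    by_contra hx1
    obtain ⟨u, htend⟩ := hf.1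
    -- Busemann functions take values that are differences of naturals
    have bus_eq : ∀ p z : FreeGroup (Fin d), bus (wordDist S) p z =
        ((wordLength S (p⁻¹ * z) : ℝ)) - ((wordLength S p⁻¹ : ℝ)) := by
      intro p z
      simp [bus, wordDist]
    -- a helper for comparing natural numbers via real distance
    have nat_cast_eq : ∀ {A B : ℕ}, |(A : ℝ) - (B : ℝ)| < 1 → A = B := by
      intro A B h
      by_contra hne
      have hz : (A : ℤ) - B ≠ 0 := by
        intro hc
        exact hne (by exact_mod_cast sub_eq_zero.mp hc)
      have h1 : (1 : ℤ) ≤ |(A : ℤ) - B| := Int.one_le_abs hz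
      have h2 : (1 : ℝ) ≤ |(A : ℝ) - B| := by
        calc (1 : ℝ) = ((1 : ℤ) : ℝ) := by norm_num
        _ ≤ ((|(A : ℤ) - B| : ℤ) : ℝ) := by exact_mod_cast h1
        _ = |(A : ℝ) - B| := by push_cast; rfl
      linarith
    -- f(1) = 0
    have f1 : f 1 = 0 := by
      have h0 : Tendsto (fun n => bus (wordDist S) (u n) 1) atTop (𝓝 (0 : ℝ)) := by
        have : ∀ n, bus (wordDist S) (u n) 1 = 0 := by
          intro n
          rw [bus_eq]
          simp
        exact tendsto_const_nhds.congr (fun n => (this n).symm)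
      exact tendsto_nhds_unique (htend 1) h0
    -- f takes integer values
    have f_int : ∀ z : FreeGroup (Fin d), ∃ m : ℤ, f z = (m : ℝ) := by
      intro z
      obtain ⟨N, hN⟩ := Metric.tendsto_atTop.mp (htend z) (1/2) (by norm_num)
      refine ⟨(wordLength S ((u N)⁻¹ * z) : ℤ) - (wordLength S (u N)⁻¹ : ℤ), ?_⟩
      have hconst : ∀ n ≥ N, bus (wordDist S) (u n) z =
          (((wordLength S ((u N)⁻¹ * z) : ℤ) - (wordLength S (u N)⁻¹ : ℤ) : ℤ) : ℝ) := by
        intro n hn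
        have d1 := hN n hn
        have d2 := hN N le_rfl
        rw [Real.dist_eq] at d1 d2
        have h3 : |bus (wordDist S) (u n) z - bus (wordDist S) (u N) z| < 1 := by
          calc |bus (wordDist S) (u n) z - bus (wordDist S) (u N) z|
              ≤ |bus (wordDist S) (u n) z - f z| + |bus (wordDist S) (u N) z - f z| := by
                rw [show bus (wordDist S) (u n) z - bus (wordDist S) (u N) z =
                  (bus (wordDist S) (u n) z - f z) - (bus (wordDist S) (u N) z - f z) by ring]
                exact abs_sub _ _
          _ < 1 := by linarith
        simp only [bus_eq] at h3 ⊢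
        set An := wordLength S ((u n)⁻¹ * z)
        set Bn := wordLength S (u n)⁻¹
        set AN := wordLength S ((u N)⁻¹ * z)
        set BN := wordLength S (u N)⁻¹
        have h4 : ((An : ℤ) - Bn) = ((AN : ℤ) - BN) := by
          by_contra hne
          have hz : ((An : ℤ) - Bn) - ((AN : ℤ) - BN) ≠ 0 := fun hc => hne (by linarith [hc] )
          have h5 : (1 : ℤ) ≤ |((An : ℤ) - Bn) - ((AN : ℤ) - BN)| := Int.one_le_abs hz
          have h6 : (1 : ℝ) ≤ |((An : ℝ) - Bn) - ((AN : ℝ) - BN)| := by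
            calc (1:ℝ) = ((1:ℤ):ℝ) := by norm_num
            _ ≤ ((|((An : ℤ) - Bn) - ((AN : ℤ) - BN)| : ℤ) : ℝ) := by exact_mod_cast h5
            _ = |((An : ℝ) - Bn) - ((AN : ℝ) - BN)| := by push_cast; rfl
          linarith
        push_cast [← h4]
        ring
      have h7 : Tendsto (fun n => bus (wordDist S) (u n) z) atTop
          (𝓝 ((((wordLength S ((u N)⁻¹ * z) : ℤ) - (wordLength S (u N)⁻¹ : ℤ) : ℤ) : ℝ))) := by
        apply tendsto_const_nhds.congr'
        filter_upwards [Filter.eventually_atTop.mpr ⟨N, hconst⟩] with n hn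
        exact hn.symm
      exact tendsto_nhds_unique (htend z) h7
    -- extraction of equidistant points
    have equid : ∀ z₁ z₂ : FreeGroup (Fin d), f z₁ = 0 → f z₂ = 0 →
        ∃ p : FreeGroup (Fin d), wordLength S (p⁻¹ * z₁) = wordLength S p ∧
          wordLength S (p⁻¹ * z₂) = wordLength S p := by
      intro z₁ z₂ h₁ h₂
      obtain ⟨N₁, hN₁⟩ := Metric.tendsto_atTop.mp (htend z₁) (1/2) (by norm_num)
      obtain ⟨N₂, hN₂⟩ := Metric.tendsto_atTop.mp (htend z₂) (1/2) (by norm_num)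
      set n := max N₁ N₂
      refine ⟨u n, ?_, ?_⟩
      · have d1 := hN₁ n (le_max_left _ _)
        rw [h₁, Real.dist_eq, sub_zero, bus_eq] at d1
        have := nat_cast_eq (lt_trans d1 (by norm_num))
        rw [this, WD.wl_inv hS]
      · have d2 := hN₂ n (le_max_right _ _)
        rw [h₂, Real.dist_eq, sub_zero, bus_eq] at d2
        have := nat_cast_eq (lt_trans d2 (by norm_num))
        rw [this, WD.wl_inv hS]
    -- the basic translation identity from the stabilizer hypothesis
    have star : ∀ g t : FreeGroup (Fin d),
        f (g⁻¹ * (x⁻¹ * t)) - f (g⁻¹ * x⁻¹) = f (g⁻¹ * t) - f g⁻¹ := by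
      intro g t
      have h1 := congrFun (hx g) t
      simp only [act] at h1
      linarith [h1]
    have base0 : ∀ u₀ z : FreeGroup (Fin d),
        f (u₀ * x⁻¹ * u₀⁻¹ * z) = f z - f u₀ + f (u₀ * x⁻¹) := by
      intro u₀ z
      have h1 := star u₀⁻¹ (u₀⁻¹ * z)
      simp only [inv_inv] at h1
      rw [show u₀ * (x⁻¹ * (u₀⁻¹ * z)) = u₀ * x⁻¹ * u₀⁻¹ * z by group] at h1
      rw [show u₀ * (u₀⁻¹ * z) = z by group] at h1
      linarith
    have hP : ∀ u₀ z : FreeGroup (Fin d),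
        f (u₀ * x⁻¹ * u₀⁻¹ * z) = f z + f (u₀ * x⁻¹ * u₀⁻¹) := by
      intro u₀ z
      have h1 := base0 u₀ z
      have h2 := base0 u₀ 1
      rw [mul_one, f1] at h2
      linarith
    have hP1 : ∀ z, f (x⁻¹ * z) = f z + f x⁻¹ := by
      intro z
      have := hP 1 z
      simpa using this
    -- power laws
    have powP : ∀ g : FreeGroup (Fin d), (∀ z, f (g * z) = f z + f g) →
        ∀ n : ℕ, ∀ z, f (g ^ n * z) = f z + n * f g := by
      intro g hg n
      induction n with
      | zero => intro z; simp
      | succ n ih =>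
        intro z
        rw [pow_succ', mul_assoc, hg, ih]
        push_cast
        ring
    have invP : ∀ g : FreeGroup (Fin d), (∀ z, f (g * z) = f z + f g) →
        ∀ z, f (g⁻¹ * z) = f z - f g := by
      intro g hg z
      have h1 := hg (g⁻¹ * z)
      rw [show g * (g⁻¹ * z) = z by group] at h1
      linarith
    have powNP : ∀ g : FreeGroup (Fin d), (∀ z, f (g * z) = f z + f g) →
        ∀ n : ℕ, ∀ z, f ((g⁻¹) ^ n * z) = f z - n * f g := by
      intro g hg n
      induction n with
      | zero => intro z; simp
      | succ n ih =>
        intro z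
        rw [pow_succ', mul_assoc, invP g hg, ih]
        push_cast
        ring
    have zpowP : ∀ g : FreeGroup (Fin d), (∀ z, f (g * z) = f z + f g) →
        ∀ (m : ℤ) (z : FreeGroup (Fin d)), f (g ^ m * z) = f z + m * f g := by
      intro g hg m z
      rcases m with n | n
      · rw [Int.ofNat_eq_coe, zpow_natCast, powP g hg n z]
        push_cast
        ring
      · rw [zpow_negSucc, ← inv_pow, powNP g hg (n + 1) z]
        push_cast
        ring
    obtain ⟨A₁, hA₁⟩ := f_int x⁻¹
    -- construct y ≠ 1 with f vanishing on all its powers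
    obtain ⟨y, hy, hfy⟩ : ∃ y : FreeGroup (Fin d), y ≠ 1 ∧
        ∀ k : ℕ, f (y ^ k) = 0 ∧ f ((y⁻¹) ^ k) = 0 := by
      by_cases hcase : A₁ = 0
      · refine ⟨x⁻¹, inv_ne_one.mpr hx1, ?_⟩
        intro k
        constructor
        · have := powP x⁻¹ hP1 k 1
          rw [mul_one, f1, hA₁, hcase] at this
          simpa using this
        · have := powNP x⁻¹ hP1 k 1
          rw [mul_one, f1, hA₁, hcase] at this
          simpa using this
      · have hxinv : x⁻¹ ≠ 1 := inv_ne_one.mpr hx1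
        have hcard : 2 ≤ Fintype.card (Fin d) := by simpa using hd
        obtain ⟨u₀, hu₀⟩ := FGW.key_ne hcard x⁻¹ hxinv A₁ hcase
        obtain ⟨A₂, hA₂⟩ := f_int (u₀ * x⁻¹ * u₀⁻¹)
        refine ⟨(x⁻¹) ^ A₂ * (u₀ * x⁻¹ * u₀⁻¹) ^ (-A₁ : ℤ), ?_, ?_⟩
        · intro h
          apply hu₀ A₂
          have h2 : (x⁻¹) ^ A₂ = ((u₀ * x⁻¹ * u₀⁻¹) ^ (-A₁ : ℤ))⁻¹ :=
            eq_inv_of_mul_eq_one_left h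
          rw [h2, ← zpow_neg, neg_neg]
        · set yy := (x⁻¹) ^ A₂ * (u₀ * x⁻¹ * u₀⁻¹) ^ (-A₁ : ℤ) with hyy
          have hstep : ∀ w, f (yy * w) = f w := by
            intro w
            rw [hyy, mul_assoc]
            rw [zpowP x⁻¹ hP1 A₂, zpowP (u₀ * x⁻¹ * u₀⁻¹) (hP u₀) (-A₁ : ℤ)]
            rw [hA₁, hA₂]
            push_cast
            ring
          have hyP : ∀ k : ℕ, ∀ z, f (yy ^ k * z) = f z := by
            intro k
            induction k with
            | zero => intro z; simp
            | succ n ih =>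
              intro z
              rw [pow_succ', mul_assoc, hstep, ih]
          have hyinv : yy⁻¹ = (u₀ * x⁻¹ * u₀⁻¹) ^ (A₁ : ℤ) * (x⁻¹) ^ (-A₂ : ℤ) := by
            rw [hyy, mul_inv_rev, ← zpow_neg, ← zpow_neg, neg_neg]
          have hstepinv : ∀ w, f (yy⁻¹ * w) = f w := by
            intro w
            rw [hyinv, mul_assoc]
            rw [zpowP (u₀ * x⁻¹ * u₀⁻¹) (hP u₀) (A₁ : ℤ), zpowP x⁻¹ hP1 (-A₂ : ℤ)]
            rw [hA₁, hA₂]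
            push_cast
            ring
          have hyPinv : ∀ k : ℕ, ∀ z, f ((yy⁻¹) ^ k * z) = f z := by
            intro k
            induction k with
            | zero => intro z; simp
            | succ n ih =>
              intro z
              rw [pow_succ', mul_assoc, hstepinv, ih]
          intro k
          constructor
          · have := hyP k 1
            rw [mul_one, f1] at this
            exact this
          · have := hyPinv k 1
            rw [mul_one, f1] at this
            exact this
    -- contradiction with the geometry of the word metric
    have H : ∀ k : ℕ, 1 ≤ k → ∃ p : FreeGroup (Fin d),
        wordLength S (p⁻¹ * y ^ k) = wordLength S p ∧
        wordLength S (p⁻¹ * (y⁻¹) ^ k) = wordLength S p := by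
      intro k _
      exact equid (y ^ k) ((y⁻¹) ^ k) (hfy k).1 (hfy k).2
    exact TR.no_equidistant_orbit hS y hy H
end

section
/- Let G be a group with a left-invariant integer-valued metric d, and let h : G → ℤ be a metric functional in ∂(G,d) that is an unbounded function and whose orbit {x.h : x ∈ G} under the G-action is finite. Let H = {x ∈ G : x.h = h} be the stabilizer of h. Then H has finite index in G and the restriction of h to H is a nontrivial group homomorphism from H to ℤ; in particular, h is a virtual homomorphism on G. -/
open Filter Topology

/-- The action of `x ∈ G` on integer-valued functions: `(x.h)(y) = h(x⁻¹y) - h(x⁻¹)`. -/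
def actZ {G : Type*} [Group G] (x : G) (h : G → ℤ) : G → ℤ :=
  fun y => h (x⁻¹ * y) - h x⁻¹

/-- For a left-invariant integer-valued metric `d` on `G` and an
unbounded metric functional `h : G → ℤ` in `∂(G,d)` with finite orbit, the
stabilizer `H` of `h` has finite index and `h` restricts to a nontrivial
homomorphism `H → ℤ`; in particular `h` is a virtual homomorphism on `G`.
(Pointwise convergence of the integer-valued Busemann functions `b_{xₙ}` to `h`
means that for each `y` the sequence `b_{xₙ}(y)` is eventually equal to `h(y)`.) -/
theorem finite_orbit_unbounded_functional_is_virtualHom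
    {G : Type*} [Group G] (d : G → G → ℤ)
    (hnonneg : ∀ x y : G, 0 ≤ d x y)
    (hzero : ∀ x y : G, d x y = 0 ↔ x = y)
    (hsymm : ∀ x y : G, d x y = d y x)
    (htri : ∀ x y z : G, d x z ≤ d x y + d y z)
    (hinv : ∀ x y z : G, d (z * x) (z * y) = d x y)
    (h : G → ℤ)
    (hb : ∃ u : ℕ → G, ∀ y : G, ∀ᶠ n in atTop, d (u n) y - d (u n) 1 = h y)
    (hnb : ∀ x : G, h ≠ fun y => d x y - d x 1)
    (hunb : ¬ ∃ B : ℤ, ∀ x : G, |h x| ≤ B)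
    (horb : (Set.range fun x : G => actZ x h).Finite) :
    ∃ H : Subgroup G, (∀ x : G, x ∈ H ↔ actZ x h = h) ∧ H.FiniteIndex ∧
      (∀ a b : G, a ∈ H → b ∈ H → h (a * b) = h a + h b) ∧
      (∃ a ∈ H, h a ≠ 0) ∧ IsVirtualHom h := by
  -- h 1 = 0
  have h1 : h 1 = 0 := by
    obtain ⟨u, hu⟩ := hb
    obtain ⟨n, hn⟩ := (hu 1).exists
    simpa using hn.symm
  -- action law
  have hlaw : ∀ x y : G, actZ (x * y) h = actZ x (actZ y h) := by
    intro x y; funext z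
    simp only [actZ, mul_inv_rev, mul_assoc]
    ring
  have hone : actZ 1 h = h := by
    funext z; simp [actZ, h1]
  -- the stabilizer subgroup
  set Hs : Subgroup G :=
    { carrier := {x | actZ x h = h}
      one_mem' := hone
      mul_mem' := by
        intro a b ha hb
        simp only [Set.mem_setOf_eq] at *
        rw [hlaw, hb, ha]
      inv_mem' := by
        intro a ha
        simp only [Set.mem_setOf_eq] at *
        have h2 : actZ a⁻¹ (actZ a h) = actZ a⁻¹ h := by rw [ha]
        rw [← hlaw, inv_mul_cancel, hone] at h2
        exact h2.symm } with hHs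
  have hmemH : ∀ x : G, x ∈ Hs ↔ actZ x h = h := fun x => Iff.rfl
  -- h is additive on Hs (acting on the left)
  have key : ∀ a ∈ Hs, ∀ y : G, h (a * y) = h a + h y := by
    intro a ha y
    have hai : a⁻¹ ∈ Hs := Hs.inv_mem ha
    have h2 := congrFun ((hmemH _).mp hai) y
    simp only [actZ, inv_inv] at h2
    omega
  -- well-definedness and injectivity of the orbit map on the quotient
  have hwd : ∀ x y : G, x⁻¹ * y ∈ Hs → actZ x h = actZ y h := by
    intro x y hxy
    have h2 : actZ x (actZ (x⁻¹ * y) h) = actZ x h := by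
      rw [(hmemH _).mp hxy]
    rw [← hlaw, mul_inv_cancel_left] at h2
    exact h2.symm
  have hinj' : ∀ x y : G, actZ x h = actZ y h → x⁻¹ * y ∈ Hs := by
    intro x y hxy
    have h2 : actZ (x⁻¹ * y) h = actZ x⁻¹ (actZ x h) := by
      rw [hlaw, hxy]
    rwa [← hlaw, inv_mul_cancel, hone] at h2
  -- finite quotient
  have hfinOrb : Finite {g : G → ℤ // g ∈ Set.range fun x : G => actZ x h} :=
    horb.to_subtype
  let f : G ⧸ Hs → {g : G → ℤ // g ∈ Set.range fun x : G => actZ x h} :=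
    Quotient.lift (fun x : G => ⟨actZ x h, ⟨x, rfl⟩⟩)
      (fun x y hxy => Subtype.ext (hwd x y (QuotientGroup.leftRel_apply.mp hxy)))
  have hfinj : Function.Injective f := by
    intro q1 q2
    induction q1 using Quotient.inductionOn with
    | h x =>
      induction q2 using Quotient.inductionOn with
      | h y =>
        intro hq
        have h2 : actZ x h = actZ y h := congrArg Subtype.val hq
        exact Quotient.sound (QuotientGroup.leftRel_apply.mpr (hinj' x y h2))
  have hfinQ : Finite (G ⧸ Hs) := Finite.of_injective f hfinj
  have hFI : Hs.FiniteIndex := Subgroup.finiteIndex_of_finite_quotient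
  -- nontriviality
  have hnontriv : ∃ a ∈ Hs, h a ≠ 0 := by
    by_contra hcon
    push_neg at hcon
    apply hunb
    obtain ⟨B, hB⟩ : ∃ B : ℤ, ∀ q : G ⧸ Hs, |h (q.out⁻¹)| ≤ B := by
      obtain ⟨B, hB⟩ := (Set.finite_range fun q : G ⧸ Hs => |h (q.out⁻¹)|).bddAbove
      exact ⟨B, fun q => hB ⟨q, rfl⟩⟩
    refine ⟨B, fun x => ?_⟩
    set q : G ⧸ Hs := QuotientGroup.mk x⁻¹ with hq
    have hc : q.out⁻¹ * x⁻¹ ∈ Hs := by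
      rw [← QuotientGroup.eq]
      exact QuotientGroup.out_eq' q
    have hx : x = (q.out⁻¹ * x⁻¹)⁻¹ * q.out⁻¹ := by group
    have hval : h x = h q.out⁻¹ := by
      rw [hx, key _ (Hs.inv_mem hc), hcon _ (Hs.inv_mem hc), zero_add]
    rw [hval]; exact hB q
  exact ⟨Hs, hmemH, hFI, fun a b ha hb => key a ha b, hnontriv,
    ⟨Hs, hFI, fun a b ha hb => key a ha b, hnontriv⟩⟩
end
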